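/- Define f(α,t) = ∫_{-1}^{1} (1 - 2xt + t²)^{-α} dx for real α and real t with 0 < t < 1. Then for every fixed t ∈ (0,1), the function α ↦ f(α,t) is differentiable on ℝ \ {1} and satisfies the differential equation ∂_α f(α,t) + f(α,t)/(α-1) = -(1/((α-1)t)) · [ log(1-t)·(1-t)^{-(2α-2)} - log(1+t)·(1+t)^{-(2α-2)} ] for all α ≠ 1. -/

import Mathlib

open MeasureTheory Real

/-- `f α t = ∫_{-1}^1 (1 - 2xt + t²)^{-α} dx`. -/
noncomputable def genIntegral (α t : ℝ) : ℝ :=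
  ∫ x in (-1:ℝ)..1, (1 - 2 * x * t + t ^ 2) ^ (-α)

lemma base_pos {t : ℝ} (ht0 : 0 < t) (ht1 : t < 1) {x : ℝ}
    (hx : x ∈ Set.uIcc (-1:ℝ) 1) : 0 < 1 - 2 * x * t + t ^ 2 := by
  rw [Set.uIcc_of_le (by norm_num)] at hx
  nlinarith [sq_nonneg (1 - t), mul_nonneg ht0.le (sub_nonneg.2 hx.2)]

lemma closedForm {t : ℝ} (ht0 : 0 < t) (ht1 : t < 1) {α : ℝ} (hα : α ≠ 1) :
    genIntegral α t =
      ((1 + t) ^ (2 - 2 * α) - (1 - t) ^ (2 - 2 * α)) / (2 * t * (1 - α)) := by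
  have h1α : 1 - α ≠ 0 := sub_ne_zero.2 (Ne.symm hα)
  have ht : (t : ℝ) ≠ 0 := ht0.ne'
  set F : ℝ → ℝ := fun x => (1 - 2 * x * t + t ^ 2) ^ (1 - α) / (-2 * t * (1 - α)) with hF
  have key : genIntegral α t = F 1 - F (-1) := by
    rw [genIntegral]
    apply intervalIntegral.integral_eq_sub_of_hasDerivAt
    · intro x hx
      have hpos := base_pos ht0 ht1 hx
      have hbase : HasDerivAt (fun x : ℝ => 1 - 2 * x * t + t ^ 2) (-(2 * t)) x := by
        have : HasDerivAt (fun x : ℝ => 2 * x * t) (2 * t) x := by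
          simpa using ((hasDerivAt_id x).const_mul 2).mul_const t
        simpa using ((this.const_sub 1).add_const (t ^ 2))
      have h2 : HasDerivAt (fun x : ℝ => (1 - 2 * x * t + t ^ 2) ^ (1 - α))
          (-(2 * t) * (1 - α) * (1 - 2 * x * t + t ^ 2) ^ (1 - α - 1)) x :=
        hbase.rpow_const (Or.inl hpos.ne')
      have h3 := h2.div_const (-2 * t * (1 - α))
      refine h3.congr_deriv ?_
      rw [show (1 - α - 1) = -α by ring]
      field_simp
    · apply ContinuousOn.intervalIntegrable
      apply ContinuousOn.rpow_const
      · fun_prop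
      · intro x hx
        exact Or.inl (base_pos ht0 ht1 hx).ne'
  rw [key]
  simp only [hF]
  have e1 : (1 - 2 * (1:ℝ) * t + t ^ 2) ^ (1 - α) = (1 - t) ^ (2 - 2 * α) := by
    rw [show (1 - 2 * (1:ℝ) * t + t ^ 2) = (1 - t) ^ (2:ℕ) by ring,
      ← Real.rpow_natCast (1 - t) 2, ← Real.rpow_mul (by linarith)]
    norm_num
    ring_nf
  have e2 : (1 - 2 * (-1:ℝ) * t + t ^ 2) ^ (1 - α) = (1 + t) ^ (2 - 2 * α) := by
    rw [show (1 - 2 * (-1:ℝ) * t + t ^ 2) = (1 + t) ^ (2:ℕ) by ring,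
      ← Real.rpow_natCast (1 + t) 2, ← Real.rpow_mul (by linarith)]
    norm_num
    ring_nf
  rw [e1, e2]
  field_simp
  ring

lemma hasDerivG {t : ℝ} (ht0 : 0 < t) (ht1 : t < 1) {α : ℝ} (hα : α ≠ 1) :
    HasDerivAt (fun β : ℝ =>
        ((1 + t) ^ (2 - 2 * β) - (1 - t) ^ (2 - 2 * β)) / (2 * t * (1 - β)))
      ((((-2 * ((1 + t) ^ (2 - 2 * α) * Real.log (1 + t))) -
          (-2 * ((1 - t) ^ (2 - 2 * α) * Real.log (1 - t)))) * (2 * t * (1 - α)) -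
        ((1 + t) ^ (2 - 2 * α) - (1 - t) ^ (2 - 2 * α)) * (-(2 * t))) /
        (2 * t * (1 - α)) ^ 2) α := by
  have hlin : HasDerivAt (fun β : ℝ => 2 - 2 * β) (-2) α := by
    simpa using ((hasDerivAt_id α).const_mul 2).const_sub 2
  have h1 : HasDerivAt (fun β : ℝ => (1 + t) ^ (2 - 2 * β))
      (-2 * ((1 + t) ^ (2 - 2 * α) * Real.log (1 + t))) α := by
    have := (Real.hasStrictDerivAt_const_rpow (by linarith : (0:ℝ) < 1 + t)
      (2 - 2 * α)).hasDerivAt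
    simpa [mul_comm, Function.comp_def] using this.comp α hlin
  have h2 : HasDerivAt (fun β : ℝ => (1 - t) ^ (2 - 2 * β))
      (-2 * ((1 - t) ^ (2 - 2 * α) * Real.log (1 - t))) α := by
    have := (Real.hasStrictDerivAt_const_rpow (by linarith : (0:ℝ) < 1 - t)
      (2 - 2 * α)).hasDerivAt
    simpa [mul_comm, Function.comp_def] using this.comp α hlin
  have hden : HasDerivAt (fun β : ℝ => 2 * t * (1 - β)) (-(2 * t)) α := by
    have : HasDerivAt (fun β : ℝ => 1 - β) (-1) α := by
      simpa using (hasDerivAt_id α).const_sub 1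
    simpa [mul_comm, mul_assoc] using (this.const_mul (2 * t))
  exact (h1.sub h2).div hden (by
    have : (1 : ℝ) - α ≠ 0 := sub_ne_zero.2 (Ne.symm hα)
    positivity)

theorem genIntegral_alpha_ODE (t : ℝ) (ht0 : 0 < t) (ht1 : t < 1) :
    ∀ α : ℝ, α ≠ 1 →
      DifferentiableAt ℝ (fun β => genIntegral β t) α ∧
      deriv (fun β => genIntegral β t) α + genIntegral α t / (α - 1) =
        -(1 / ((α - 1) * t)) *
          (Real.log (1 - t) * (1 - t) ^ (-(2 * α - 2)) -
            Real.log (1 + t) * (1 + t) ^ (-(2 * α - 2))) := by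
  intro α hα
  have heq : (fun β => genIntegral β t) =ᶠ[nhds α]
      (fun β : ℝ => ((1 + t) ^ (2 - 2 * β) - (1 - t) ^ (2 - 2 * β)) / (2 * t * (1 - β))) := by
    filter_upwards [eventually_ne_nhds hα] with β hβ
    exact closedForm ht0 ht1 hβ
  have hg := hasDerivG ht0 ht1 hα
  constructor
  · exact hg.differentiableAt.congr_of_eventuallyEq heq
  · rw [heq.deriv_eq, hg.deriv, closedForm ht0 ht1 hα,
      show -(2 * α - 2) = 2 - 2 * α by ring]
    have h1α : (1 : ℝ) - α ≠ 0 := sub_ne_zero.2 (Ne.symm hα)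
    have hα1 : (α : ℝ) - 1 ≠ 0 := sub_ne_zero.2 hα
    have ht : (t : ℝ) ≠ 0 := ht0.ne'
    field_simp
    ring
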